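/- Let (X_t)_{t ≥ 0} be an ℝ^d-valued stochastic process on a probability space that is stochastically continuous, i.e. for every t ≥ 0 and a > 0, P(|X_u − X_t| ≥ a) → 0 as u → t. For 0 ≤ s ≤ t and bounded uniformly continuous f : ℝ^d → ℝ define T_{s,t} f(x) = E f(X_t − X_s + x). Then the family (T_{s,t}) is strongly continuous: for every 0 ≤ s ≤ t and every bounded uniformly continuous f, if (u_n, v_n) → (s, t) with 0 ≤ u_n ≤ v_n for all n, then sup_{x ∈ ℝ^d} |T_{u_n, v_n} f(x) − T_{s,t} f(x)| → 0. -/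

import Mathlib

open MeasureTheory Filter

/-- If `(X_t)_{t≥0}` is a stochastically continuous `ℝ^d`-valued process, then
the Markov evolution `T_{s,t} f (x) = E f(X_t − X_s + x)` is strongly continuous on bounded
uniformly continuous functions: whenever `(u_n, v_n) → (s, t)` with `0 ≤ u_n ≤ v_n`,
`T_{u_n, v_n} f → T_{s,t} f` uniformly in `x`. -/
theorem additive_evolution_strongly_continuous
    {Ω : Type*} [MeasurableSpace Ω] (P : Measure Ω) [IsProbabilityMeasure P]
    (d : ℕ) (X : ℝ → Ω → (Fin d → ℝ)) (hX : ∀ t, Measurable (X t))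
    (hstoch : ∀ t : ℝ, 0 ≤ t → ∀ a : ℝ, 0 < a →
      Filter.Tendsto (fun u => P {ω | a ≤ ‖X u ω - X t ω‖})
        (nhdsWithin t (Set.Ici 0)) (nhds 0)) :
    ∀ s t : ℝ, 0 ≤ s → s ≤ t →
      ∀ f : (Fin d → ℝ) → ℝ, UniformContinuous f → (∃ C, ∀ x, |f x| ≤ C) →
        ∀ u v : ℕ → ℝ, (∀ n, 0 ≤ u n) → (∀ n, u n ≤ v n) →
          Filter.Tendsto u Filter.atTop (nhds s) →
          Filter.Tendsto v Filter.atTop (nhds t) →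
          TendstoUniformly
            (fun n x => ∫ ω, f (X (v n) ω - X (u n) ω + x) ∂P)
            (fun x => ∫ ω, f (X t ω - X s ω + x) ∂P) Filter.atTop := by
  intro s t hs hst f hf hCex u v hu huv hus hvt
  obtain ⟨C, hC⟩ := hCex
  have hC0 : 0 ≤ C := (abs_nonneg _).trans (hC 0)
  have hfc : Continuous f := hf.continuous
  have hint : ∀ g : Ω → Fin d → ℝ, Measurable g → ∀ x : Fin d → ℝ,
      Integrable (fun ω => f (g ω + x)) P := by
    intro g hg x
    refine Integrable.mono' (integrable_const C)
      (hfc.measurable.comp (hg.add_const x)).aestronglyMeasurable ?_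
    filter_upwards with ω using by simpa using hC _
  rw [Metric.tendstoUniformly_iff]
  intro ε hε
  obtain ⟨δ, hδ, hδf⟩ := Metric.uniformContinuous_iff.mp hf (ε/4) (by positivity)
  set A : ℕ → Set Ω :=
    fun n => {ω | δ ≤ ‖(X (v n) ω - X (u n) ω) - (X t ω - X s ω)‖} with hA_def
  have hAmeas : ∀ n, MeasurableSet (A n) := by
    intro n
    exact measurableSet_le measurable_const
      (((((hX (v n)).sub (hX (u n))).sub ((hX t).sub (hX s)))).norm)
  -- convergence of P (A n) to 0
  have h1 : Filter.Tendsto (fun n => P {ω | δ/2 ≤ ‖X (u n) ω - X s ω‖})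
      Filter.atTop (nhds 0) :=
    (hstoch s hs (δ/2) (by positivity)).comp
      (tendsto_nhdsWithin_of_tendsto_nhds_of_eventually_within u hus
        (Filter.Eventually.of_forall hu))
  have h2 : Filter.Tendsto (fun n => P {ω | δ/2 ≤ ‖X (v n) ω - X t ω‖})
      Filter.atTop (nhds 0) :=
    (hstoch t (hs.trans hst) (δ/2) (by positivity)).comp
      (tendsto_nhdsWithin_of_tendsto_nhds_of_eventually_within v hvt
        (Filter.Eventually.of_forall fun n => (hu n).trans (huv n)))
  have hsub : ∀ n, A n ⊆ {ω | δ/2 ≤ ‖X (u n) ω - X s ω‖} ∪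
      {ω | δ/2 ≤ ‖X (v n) ω - X t ω‖} := by
    intro n ω hω
    by_contra h
    simp only [Set.mem_union, Set.mem_setOf_eq, not_or, not_le] at h
    obtain ⟨h1', h2'⟩ := h
    have : ‖(X (v n) ω - X (u n) ω) - (X t ω - X s ω)‖
        ≤ ‖X (v n) ω - X t ω‖ + ‖X (u n) ω - X s ω‖ := by
      have : (X (v n) ω - X (u n) ω) - (X t ω - X s ω)
          = (X (v n) ω - X t ω) - (X (u n) ω - X s ω) := by abel
      rw [this]
      exact norm_sub_le _ _
    have hωA : δ ≤ ‖(X (v n) ω - X (u n) ω) - (X t ω - X s ω)‖ := hω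
    linarith
  have hPA : Filter.Tendsto (fun n => P (A n)) Filter.atTop (nhds 0) := by
    have hle : ∀ n, P (A n) ≤ P {ω | δ/2 ≤ ‖X (u n) ω - X s ω‖}
        + P {ω | δ/2 ≤ ‖X (v n) ω - X t ω‖} :=
      fun n => (measure_mono (hsub n)).trans (measure_union_le _ _)
    have hadd : Filter.Tendsto (fun n => P {ω | δ/2 ≤ ‖X (u n) ω - X s ω‖}
        + P {ω | δ/2 ≤ ‖X (v n) ω - X t ω‖}) Filter.atTop (nhds 0) := by
      simpa using h1.add h2
    exact tendsto_of_tendsto_of_tendsto_of_le_of_le tendsto_const_nhds hadd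
      (fun n => zero_le) hle
  -- eventual smallness
  have hCpos : (0:ℝ) < C + 1 := by linarith
  have hsmall : ∀ᶠ n in Filter.atTop,
      P (A n) < ENNReal.ofReal (ε / (8 * (C + 1))) := by
    refine hPA.eventually_lt_const ?_
    exact ENNReal.ofReal_pos.mpr (by positivity)
  filter_upwards [hsmall] with n hn x
  have hPAn : (P (A n)).toReal < ε / (8 * (C + 1)) :=
    ENNReal.toReal_lt_of_lt_ofReal hn
  -- the integral bound
  have hIY := hint (fun ω => X t ω - X s ω) ((hX t).sub (hX s)) x
  have hIYn := hint (fun ω => X (v n) ω - X (u n) ω) ((hX (v n)).sub (hX (u n))) x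
  have hbound_int : Integrable
      (fun ω => ε/4 + (A n).indicator (fun _ => 2*(C+1)) ω) P :=
    (integrable_const _).add ((integrable_const _).indicator (hAmeas n))
  have hpt : ∀ ω, |f (X t ω - X s ω + x) - f (X (v n) ω - X (u n) ω + x)|
      ≤ ε/4 + (A n).indicator (fun _ => 2*(C+1)) ω := by
    intro ω
    by_cases hω : ω ∈ A n
    · rw [Set.indicator_of_mem hω]
      have := hC (X t ω - X s ω + x)
      have := hC (X (v n) ω - X (u n) ω + x)
      have habs := abs_sub (f (X t ω - X s ω + x)) (f (X (v n) ω - X (u n) ω + x))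
      linarith
    · rw [Set.indicator_of_notMem hω]
      have hω' : ‖(X (v n) ω - X (u n) ω) - (X t ω - X s ω)‖ < δ := by
        simpa [hA_def, not_le] using hω
      have hd : dist (X t ω - X s ω + x) (X (v n) ω - X (u n) ω + x) < δ := by
        rw [dist_eq_norm]
        simpa [norm_sub_rev] using (by simpa using hω' : ‖(X (v n) ω - X (u n) ω + x) - (X t ω - X s ω + x)‖ < δ)
      have := hδf hd
      rw [Real.dist_eq] at this
      linarith [this]
  calc dist (∫ ω, f (X t ω - X s ω + x) ∂P) (∫ ω, f (X (v n) ω - X (u n) ω + x) ∂P)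
      = |∫ ω, (f (X t ω - X s ω + x) - f (X (v n) ω - X (u n) ω + x)) ∂P| := by
        rw [Real.dist_eq, integral_sub hIY hIYn]
    _ ≤ ∫ ω, |f (X t ω - X s ω + x) - f (X (v n) ω - X (u n) ω + x)| ∂P :=
        by simpa [Real.norm_eq_abs] using
          norm_integral_le_integral_norm
            (fun ω => f (X t ω - X s ω + x) - f (X (v n) ω - X (u n) ω + x)) (μ := P)
    _ ≤ ∫ ω, (ε/4 + (A n).indicator (fun _ => 2*(C+1)) ω) ∂P := by
        refine integral_mono ((hIY.sub hIYn).abs) hbound_int hpt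
    _ = ε/4 + 2*(C+1) * (P (A n)).toReal := by
        rw [integral_add (integrable_const _) ((integrable_const _).indicator (hAmeas n)),
          integral_const, integral_indicator_const _ (hAmeas n)]
        simp [mul_comm, measureReal_def]
    _ < ε/4 + 2*(C+1) * (ε / (8 * (C + 1))) := by
        have h2C : (0:ℝ) < 2*(C+1) := by linarith
        nlinarith [hPAn]
    _ ≤ ε := by
        have : 2*(C+1) * (ε / (8 * (C + 1))) = ε/4 := by
          field_simp; ring
        rw [this]; linarith
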